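/- Let a, b : ℝ → ℝ be continuous and suppose there exist constants M, δ > 0 such that |a(t)| + |b(t)| ≤ M and 4 b(t) + a(t)² ≤ −δ for all t ∈ ℝ. Let U(t,s) denote the evolution family on ℝ² of the planar linear system x'(t) = −a(t) x(t) + y(t), y'(t) = −b(t) x(t) (i.e. U(t,s)v is the value at time t of the unique solution taking the value v at time s). Then U is exponentially bounded and has an exponential dichotomy: there exist constants N, β > 0 and projections P(t) on ℝ², with t ↦ P(t)v bounded and continuous for each v, such that P(t)U(t,s) = U(t,s)P(s) for s ≤ t, the restriction of U(t,s) to the kernel of P(s) is a bijection onto the kernel of P(t), ‖U(t,s)P(s)v‖ ≤ N e^{−β(t−s)} ‖v‖ for s ≤ t, and the inverse U_Q(s,t) of this restriction satisfies ‖U_Q(s,t)(Id − P(t))v‖ ≤ N e^{−β(t−s)} ‖v‖ for s ≤ t. -/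

import Mathlib

open Real Filter Set

section Gron
variable {E : Type*} [NormedAddCommGroup E] [NormedSpace ℝ E]

lemma gron_fwd {g g' : ℝ → E} {c : ℝ}
    (hg : ∀ t, HasDerivAt g (g' t) t) (hb : ∀ t, ‖g' t‖ ≤ c * ‖g t‖)
    {σ τ : ℝ} (h : σ ≤ τ) : ‖g τ‖ ≤ ‖g σ‖ * Real.exp (c * (τ - σ)) := by
  have key := norm_le_gronwallBound_of_norm_deriv_right_le
    (f := g) (f' := g') (δ := ‖g σ‖) (K := c) (ε := 0) (a := σ) (b := τ)
    (fun x _ => (hg x).continuousAt.continuousWithinAt)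
    (fun x _ => (hg x).hasDerivWithinAt)
    le_rfl (fun x _ => by simpa using hb x) τ ⟨h, le_rfl⟩
  simpa [gronwallBound_ε0] using key

lemma gron_bwd {g g' : ℝ → E} {c : ℝ}
    (hg : ∀ t, HasDerivAt g (g' t) t) (hb : ∀ t, ‖g' t‖ ≤ c * ‖g t‖)
    {σ τ : ℝ} (h : σ ≤ τ) : ‖g σ‖ ≤ ‖g τ‖ * Real.exp (c * (τ - σ)) := by
  have key : ∀ μ : ℝ, HasDerivAt (fun μ => g (σ + τ - μ)) (-g' (σ + τ - μ)) μ := by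
    intro μ
    have h1 : HasDerivAt (fun μ : ℝ => σ + τ - μ) (-1) μ := by
      simpa using (hasDerivAt_id μ).const_sub (σ + τ)
    have := (hg (σ + τ - μ)).scomp μ h1
    rw [neg_one_smul] at this
    exact this
  have hb2 : ∀ μ : ℝ, ‖-g' (σ + τ - μ)‖ ≤ c * ‖g (σ + τ - μ)‖ := by
    intro μ; simpa using hb (σ + τ - μ)
  have := gron_fwd key hb2 h
  simpa using this

end Gron

set_option maxHeartbeats 4000000 in
theorem lienard_linearization_exponential_dichotomy
    (a b : ℝ → ℝ) (ha : Continuous a) (hb : Continuous b)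
    (M δ : ℝ) (hM : 0 < M) (hδ : 0 < δ)
    (hbound : ∀ t : ℝ, |a t| + |b t| ≤ M)
    (hneg : ∀ t : ℝ, 4 * b t + (a t) ^ 2 ≤ -δ)
    (U : ℝ → ℝ → (ℝ × ℝ) →L[ℝ] (ℝ × ℝ))
    (hU_id : ∀ s : ℝ, U s s = ContinuousLinearMap.id ℝ (ℝ × ℝ))
    (hU_ode : ∀ s : ℝ, ∀ v : ℝ × ℝ, ∀ t : ℝ,
      HasDerivAt (fun τ : ℝ => U τ s v)
        (-(a t) * (U t s v).1 + (U t s v).2, -(b t) * (U t s v).1) t) :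
    (∃ Mb ω : ℝ, ∀ s t : ℝ, s ≤ t → ‖U t s‖ ≤ Mb * Real.exp (ω * (t - s))) ∧
    ∃ N β : ℝ, 0 < N ∧ 0 < β ∧
      ∃ P : ℝ → (ℝ × ℝ) →L[ℝ] (ℝ × ℝ),
        (∀ t : ℝ, ∀ v : ℝ × ℝ, P t (P t v) = P t v) ∧
        (∀ v : ℝ × ℝ, Continuous fun t : ℝ => P t v) ∧
        (∀ v : ℝ × ℝ, ∃ C : ℝ, ∀ t : ℝ, ‖P t v‖ ≤ C) ∧
        (∀ s t : ℝ, s ≤ t → ∀ v : ℝ × ℝ, P t (U t s v) = U t s (P s v)) ∧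
        (∀ s t : ℝ, s ≤ t →
          Set.BijOn (fun v : ℝ × ℝ => U t s v)
            (LinearMap.ker (P s : (ℝ × ℝ) →ₗ[ℝ] (ℝ × ℝ)) : Set (ℝ × ℝ))
              (LinearMap.ker (P t : (ℝ × ℝ) →ₗ[ℝ] (ℝ × ℝ)) : Set (ℝ × ℝ))) ∧
        (∀ s t : ℝ, s ≤ t → ∀ v : ℝ × ℝ,
          ‖U t s (P s v)‖ ≤ N * Real.exp (-β * (t - s)) * ‖v‖) ∧
        ∃ V : ℝ → ℝ → (ℝ × ℝ) → (ℝ × ℝ),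
          (∀ s t : ℝ, s ≤ t → ∀ v : ℝ × ℝ,
            V s t (U t s (v - P s v)) = v - P s v) ∧
          (∀ s t : ℝ, s ≤ t → ∀ v : ℝ × ℝ,
            U t s (V s t (v - P t v)) = v - P t v) ∧
          (∀ s t : ℝ, s ≤ t → ∀ v : ℝ × ℝ,
            ‖V s t (v - P t v)‖ ≤ N * Real.exp (-β * (t - s)) * ‖v‖) := by
  have haM : ∀ t, |a t| ≤ M := fun t => le_trans (le_add_of_nonneg_right (abs_nonneg _)) (hbound t)
  have hbM : ∀ t, |b t| ≤ M := fun t => le_trans (le_add_of_nonneg_left (abs_nonneg _)) (hbound t)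
  have hδ4M : δ ≤ 4 * M := by
    have h1 := hneg 0
    have h2 := neg_abs_le (b 0)
    have h3 := hbM 0
    nlinarith [sq_nonneg (a 0)]
  set c := M + 1 with hc_def
  have hc0 : (0:ℝ) < c := by simp [hc_def]; linarith
  set bet := δ/(16*(1+M)) with hbet_def
  have hbet0 : 0 < bet := by rw [hbet_def]; positivity
  have hbet14 : bet ≤ 1/4 := by
    rw [hbet_def, div_le_iff₀ (by linarith : (0:ℝ) < 16*(1+M))]
    linarith
  have hFnorm : ∀ (t : ℝ) (w : ℝ×ℝ), ‖((-(a t)*w.1 + w.2, -(b t)*w.1) : ℝ×ℝ)‖ ≤ c * ‖w‖ := by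
    intro t w
    have h1 : |w.1| ≤ ‖w‖ := by simpa [Real.norm_eq_abs] using norm_fst_le w
    have h2 : |w.2| ≤ ‖w‖ := by simpa [Real.norm_eq_abs] using norm_snd_le w
    have hn : 0 ≤ ‖w‖ := norm_nonneg w
    have haMt := haM t
    have hbMt := hbM t
    have e1 : |(-(a t))*w.1 + w.2| ≤ c*‖w‖ := by
      calc |(-(a t))*w.1 + w.2| ≤ |(-(a t))*w.1| + |w.2| := abs_add_le _ _
        _ = |a t| * |w.1| + |w.2| := by rw [abs_mul, abs_neg]
        _ ≤ M * ‖w‖ + ‖w‖ :=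
            add_le_add (mul_le_mul haMt h1 (abs_nonneg _) hM.le) h2
        _ = c*‖w‖ := by rw [hc_def]; ring
    have e2 : |(-(b t))*w.1| ≤ c*‖w‖ := by
      calc |(-(b t))*w.1| = |b t| * |w.1| := by rw [abs_mul, abs_neg]
        _ ≤ M*‖w‖ := mul_le_mul hbMt h1 (abs_nonneg _) hM.le
        _ ≤ c*‖w‖ := by rw [hc_def]; nlinarith
    rw [Prod.norm_def]
    refine max_le (by simpa [Real.norm_eq_abs] using e1) ?_
    rw [Real.norm_eq_abs, abs_mul, abs_neg, ← abs_mul]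
    simpa [abs_mul] using e2
  have hgrow : ∀ (s : ℝ) (v : ℝ×ℝ) (σ τ : ℝ), σ ≤ τ →
      ‖U τ s v‖ ≤ ‖U σ s v‖ * exp (c*(τ-σ)) := by
    intro s v σ τ h
    exact gron_fwd (hU_ode s v) (fun t => hFnorm t _) h
  have hshrink : ∀ (s : ℝ) (v : ℝ×ℝ) (σ τ : ℝ), σ ≤ τ →
      ‖U σ s v‖ ≤ ‖U τ s v‖ * exp (c*(τ-σ)) := by
    intro s v σ τ h
    exact gron_bwd (hU_ode s v) (fun t => hFnorm t _) h
  have hcoc : ∀ (r s' t : ℝ) (v : ℝ×ℝ), U t s' (U s' r v) = U t r v := by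
    intro r s' t₁ v
    set g : ℝ → ℝ×ℝ := fun t => U t s' (U s' r v) - U t r v with hg_def
    have hgd : ∀ t, HasDerivAt g ((-(a t)*(g t).1 + (g t).2, -(b t)*(g t).1)) t := by
      intro t
      have h12 := (hU_ode s' (U s' r v) t).sub (hU_ode r v t)
      refine h12.congr_deriv ?_
      refine Prod.ext ?_ ?_ <;> simp [hg_def] <;> ring
    have hb' : ∀ t, ‖((-(a t)*(g t).1 + (g t).2, -(b t)*(g t).1) : ℝ×ℝ)‖ ≤ c*‖g t‖ :=
      fun t => hFnorm t (g t)
    have hgs' : g s' = 0 := by simp [hg_def, hU_id]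
    have hz : ∀ t, g t = 0 := by
      intro t
      rcases le_total s' t with h | h
      · have := gron_fwd hgd hb' h
        rw [hgs'] at this
        simpa using norm_le_zero_iff.mp (by simpa using this)
      · have := gron_bwd hgd hb' h
        rw [hgs'] at this
        simpa using norm_le_zero_iff.mp (by simpa using this)
    exact sub_eq_zero.mp (hz t₁)
  have hUinj : ∀ (s t : ℝ) (v w : ℝ×ℝ), U t s v = U t s w → v = w := by
    intro s t v w h
    have h1 : U s t (U t s v) = v := by rw [hcoc s t s v, hU_id]; rfl
    have h2 : U s t (U t s w) = w := by rw [hcoc s t s w, hU_id]; rfl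
    rw [← h1, ← h2, h]
  have hx : ∀ (s:ℝ) (v:ℝ×ℝ) (t:ℝ),
      HasDerivAt (fun τ => (U τ s v).1) (-(a t)*(U t s v).1 + (U t s v).2) t := by
    intro s v t
    have := (ContinuousLinearMap.fst ℝ ℝ ℝ).hasFDerivAt.comp_hasDerivAt t (hU_ode s v t)
    exact this.congr_deriv (by simp)
  have hy : ∀ (s:ℝ) (v:ℝ×ℝ) (t:ℝ),
      HasDerivAt (fun τ => (U τ s v).2) (-(b t)*(U t s v).1) t := by
    intro s v t
    have := (ContinuousLinearMap.snd ℝ ℝ ℝ).hasFDerivAt.comp_hasDerivAt t (hU_ode s v t)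
    exact this.congr_deriv (by simp)
  have hVd : ∀ (s:ℝ) (v:ℝ×ℝ) (t:ℝ), HasDerivAt (fun τ => (U τ s v).1*(U τ s v).2)
      ((U t s v).2^2 - a t*((U t s v).1*(U t s v).2) - b t*(U t s v).1^2) t := by
    intro s v t
    have := (hx s v t).mul (hy s v t)
    refine this.congr_deriv ?_
    ring
  have hquad : ∀ (t : ℝ) (X Y : ℝ), 2*bet*(X^2+Y^2) ≤ Y^2 - a t*(X*Y) - b t*X^2 := by
    intro t X Y
    have hnegt := hneg t
    have hbMt := neg_le_abs (b t) |>.trans (hbM t)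
    have h1M : (0:ℝ) < 1 + M := by linarith
    have h8 : 8*bet*(1 - b t) ≤ δ/2 := by
      have hb' : 1 - b t ≤ 1 + M := by linarith
      have he : 8*bet*(1+M) = δ/2 := by rw [hbet_def]; field_simp; ring
      nlinarith [mul_le_mul_of_nonneg_left hb' (by positivity : (0:ℝ) ≤ 8*bet)]
    have hA0 : δ/8 ≤ -b t - 2*bet := by
      have h2b : 2*bet ≤ δ/8 := by
        rw [hbet_def, ← mul_div_assoc, div_le_div_iff₀ (by linarith) (by norm_num)]
        nlinarith
      nlinarith [sq_nonneg (a t)]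
    have hC0 : 1/2 ≤ 1 - 2*bet := by linarith
    have hAC : a t^2 ≤ 4*(-b t - 2*bet)*(1-2*bet) := by nlinarith [sq_nonneg bet]
    have hA0' : (0:ℝ) < -b t - 2*bet := by linarith [hδ]
    nlinarith [sq_nonneg (2*(-b t - 2*bet)*X - a t*Y),
      mul_nonneg (sub_nonneg.2 hAC) (sq_nonneg Y), hA0', sq_nonneg X, sq_nonneg Y]
  have hmonoP : ∀ (s:ℝ) (v:ℝ×ℝ), Monotone (fun t => (U t s v).1*(U t s v).2*exp (-(4*bet)*t)) := by
    intro s v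
    have hd : ∀ t, HasDerivAt (fun t => (U t s v).1*(U t s v).2*exp (-(4*bet)*t))
        ((((U t s v).2^2 - a t*((U t s v).1*(U t s v).2) - b t*(U t s v).1^2)
          + (-(4*bet))*((U t s v).1*(U t s v).2)) * exp (-(4*bet)*t)) t := by
      intro t
      have he : HasDerivAt (fun t : ℝ => exp (-(4*bet)*t)) (exp (-(4*bet)*t) * (-(4*bet))) t := by
        simpa using (((hasDerivAt_id t).const_mul (-(4*bet)))).exp
      have := (hVd s v t).mul he
      refine this.congr_deriv ?_
      ring
    apply monotone_of_deriv_nonneg (fun t => (hd t).differentiableAt)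
    intro t
    rw [(hd t).deriv]
    have hq := hquad t (U t s v).1 (U t s v).2
    have h1 : 0 ≤ ((U t s v).2^2 - a t*((U t s v).1*(U t s v).2) - b t*(U t s v).1^2)
        + (-(4*bet))*((U t s v).1*(U t s v).2) := by
      nlinarith [sq_nonneg ((U t s v).1 - (U t s v).2), hbet0]
    exact mul_nonneg h1 (exp_pos _).le
  have hmonoM : ∀ (s:ℝ) (v:ℝ×ℝ), Monotone (fun t => (U t s v).1*(U t s v).2*exp ((4*bet)*t)) := by
    intro s v
    have hd : ∀ t, HasDerivAt (fun t => (U t s v).1*(U t s v).2*exp ((4*bet)*t))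
        ((((U t s v).2^2 - a t*((U t s v).1*(U t s v).2) - b t*(U t s v).1^2)
          + (4*bet)*((U t s v).1*(U t s v).2)) * exp ((4*bet)*t)) t := by
      intro t
      have he : HasDerivAt (fun t : ℝ => exp ((4*bet)*t)) (exp ((4*bet)*t) * (4*bet)) t := by
        simpa using (((hasDerivAt_id t).const_mul (4*bet))).exp
      have := (hVd s v t).mul he
      refine this.congr_deriv ?_
      ring
    apply monotone_of_deriv_nonneg (fun t => (hd t).differentiableAt)
    intro t
    rw [(hd t).deriv]
    have hq := hquad t (U t s v).1 (U t s v).2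
    have h1 : 0 ≤ ((U t s v).2^2 - a t*((U t s v).1*(U t s v).2) - b t*(U t s v).1^2)
        + (4*bet)*((U t s v).1*(U t s v).2) := by
      nlinarith [sq_nonneg ((U t s v).1 + (U t s v).2), hbet0]
    exact mul_nonneg h1 (exp_pos _).le
  have hnormsq1 : ∀ w : ℝ×ℝ, ‖w‖^2 ≤ w.1^2 + w.2^2 := by
    intro w
    rw [Prod.norm_def]
    rcases le_total ‖w.1‖ ‖w.2‖ with h | h
    · rw [max_eq_right h, Real.norm_eq_abs, sq_abs]
      nlinarith [sq_nonneg w.1]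
    · rw [max_eq_left h, Real.norm_eq_abs, sq_abs]
      nlinarith [sq_nonneg w.2]
  have hnormsq2 : ∀ w : ℝ×ℝ, w.1^2 + w.2^2 ≤ 2*‖w‖^2 := by
    intro w
    rw [Prod.norm_def]
    rcases le_total ‖w.1‖ ‖w.2‖ with h | h
    · rw [max_eq_right h, Real.norm_eq_abs, sq_abs]
      have := mul_le_mul h h (norm_nonneg _) (norm_nonneg _)
      simp only [Real.norm_eq_abs] at this h
      nlinarith [sq_abs w.1, sq_abs w.2]
    · rw [max_eq_left h, Real.norm_eq_abs, sq_abs]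
      have := mul_le_mul h h (norm_nonneg _) (norm_nonneg _)
      simp only [Real.norm_eq_abs] at this h
      nlinarith [sq_abs w.1, sq_abs w.2]
  set that := (bet/(2*c))*(1 - exp (-(2*c))) with hthat_def
  have hthat0 : 0 < that := by
    rw [hthat_def]
    have h1 : exp (-(2*c)) < 1 := exp_lt_one_iff.mpr (by linarith)
    have h2 : 0 < bet/(2*c) := by positivity
    nlinarith
  have htheta : ∀ (s:ℝ) (v:ℝ×ℝ) (t:ℝ),
      (U (t-1) s v).1*(U (t-1) s v).2 + that*((U t s v).1^2+(U t s v).2^2)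
        ≤ (U t s v).1*(U t s v).2 := by
    intro s v T
    have hlow : ∀ τ', τ' ≤ T →
        ((U T s v).1^2+(U T s v).2^2) * exp ((2*c)*τ' - (2*c)*T)
          ≤ 2*((U τ' s v).1^2+(U τ' s v).2^2) := by
      intro τ' hτ'
      have h1 := hgrow s v τ' T hτ'
      have h2 := hnormsq2 (U T s v)
      have h3 := hnormsq1 (U τ' s v)
      have h4 : ‖U T s v‖^2 ≤ ‖U τ' s v‖^2 * exp ((2*c)*T - (2*c)*τ') := by
        have h5 : ‖U T s v‖^2 ≤ (‖U τ' s v‖ * exp (c*(T-τ')))^2 := by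
          have := mul_le_mul h1 h1 (norm_nonneg _) (mul_nonneg (norm_nonneg _) (exp_pos _).le)
          nlinarith [this]
        calc ‖U T s v‖^2 ≤ (‖U τ' s v‖ * exp (c*(T-τ')))^2 := h5
          _ = ‖U τ' s v‖^2 * (exp (c*(T-τ')) * exp (c*(T-τ'))) := by ring
          _ = ‖U τ' s v‖^2 * exp ((2*c)*T - (2*c)*τ') := by
              rw [← Real.exp_add]; ring_nf
      have hE : exp ((2*c)*τ' - (2*c)*T) * exp ((2*c)*T - (2*c)*τ') = 1 := by
        rw [← Real.exp_add, show (2*c)*τ' - (2*c)*T + ((2*c)*T - (2*c)*τ') = 0 by ring,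
          Real.exp_zero]
      have hEpos := Real.exp_pos ((2*c)*τ' - (2*c)*T)
      calc ((U T s v).1^2+(U T s v).2^2) * exp ((2*c)*τ' - (2*c)*T)
          ≤ (2*‖U T s v‖^2) * exp ((2*c)*τ' - (2*c)*T) :=
            mul_le_mul_of_nonneg_right h2 hEpos.le
        _ ≤ (2*(‖U τ' s v‖^2 * exp ((2*c)*T - (2*c)*τ'))) * exp ((2*c)*τ' - (2*c)*T) :=
            mul_le_mul_of_nonneg_right (by linarith [h4]) hEpos.le
        _ = 2*‖U τ' s v‖^2 * (exp ((2*c)*τ' - (2*c)*T) * exp ((2*c)*T - (2*c)*τ')) := by ring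
        _ = 2*‖U τ' s v‖^2 := by rw [hE, mul_one]
        _ ≤ 2*((U τ' s v).1^2+(U τ' s v).2^2) := by linarith [h3]
    set F : ℝ → ℝ := fun τ => (U τ s v).1*(U τ s v).2
      - (bet/(2*c))*((U T s v).1^2+(U T s v).2^2)*exp ((2*c)*τ - (2*c)*T) with hF_def
    have hFd : ∀ τ, HasDerivAt F
        (((U τ s v).2^2 - a τ*((U τ s v).1*(U τ s v).2) - b τ*(U τ s v).1^2)
          - bet*((U T s v).1^2+(U T s v).2^2)*exp ((2*c)*τ - (2*c)*T)) τ := by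
      intro τ
      have h1 : HasDerivAt (fun τ : ℝ => (2*c)*τ - (2*c)*T) (2*c) τ := by
        simpa using ((hasDerivAt_id τ).const_mul (2*c)).sub_const ((2*c)*T)
      have he := h1.exp
      have := (hVd s v τ).sub (he.const_mul ((bet/(2*c))*((U T s v).1^2+(U T s v).2^2)))
      refine this.congr_deriv ?_
      field_simp
    have hmF : MonotoneOn F (Icc (T-1) T) := by
      apply monotoneOn_of_deriv_nonneg (convex_Icc _ _)
      · exact fun τ _ => ((hFd τ).differentiableAt).continuousAt.continuousWithinAt
      · exact fun τ _ => ((hFd τ).differentiableAt).differentiableWithinAt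
      · intro τ hτ
        rw [interior_Icc] at hτ
        rw [(hFd τ).deriv]
        have hq := hquad τ (U τ s v).1 (U τ s v).2
        have hl := hlow τ hτ.2.le
        nlinarith [hbet0]
    have hmem1 : T - 1 ∈ Icc (T-1) T := by constructor <;> linarith
    have hmem2 : T ∈ Icc (T-1) T := by constructor <;> linarith
    have key := hmF hmem1 hmem2 (by linarith)
    rw [hF_def] at key
    simp only at key
    rw [show (2*c)*(T-1) - (2*c)*T = -(2*c) by ring] at key
    rw [show (2*c)*T - (2*c)*T = 0 by ring, Real.exp_zero] at key
    rw [hthat_def]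
    nlinarith [key]
  set th := that * exp (-(2*c)) / 2 with hth_def
  have hth0 : 0 < th := by
    rw [hth_def]; positivity
  have hth1 : th ≤ 1 := by
    have h1 : exp (-(2*c)) ≤ 1 := exp_le_one_iff.mpr (by linarith)
    have h2 : that ≤ bet/(2*c) := by
      rw [hthat_def]
      have h3 : 0 < bet/(2*c) := by positivity
      nlinarith [exp_pos (-(2*c))]
    have h4 : bet/(2*c) ≤ bet := by
      rw [div_le_iff₀ (by linarith)]
      nlinarith [hbet0]
    have h5 : 0 < that := hthat0
    rw [hth_def]
    nlinarith [exp_pos (-(2*c))]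
  set kap := th⁻¹ with hkap_def
  have hkap1 : 1 ≤ kap := by
    rw [hkap_def]
    have := mul_inv_cancel₀ hth0.ne'
    nlinarith [inv_pos.mpr hth0]
  have hkap0 : 0 < kap := inv_pos.mpr hth0
  have hthkap : th * kap = 1 := mul_inv_cancel₀ hth0.ne'
  obtain ⟨p₀, hp₀n, hp₀⟩ : ∃ v : ℝ×ℝ, ‖v‖ = 1 ∧ ∀ t : ℝ, (U t 0 v).1*(U t 0 v).2 ≤ 0 := by
    set A : ℕ → Set (ℝ×ℝ) :=
      fun n => {v : ℝ×ℝ | ‖v‖ = 1 ∧ (U (n:ℝ) 0 v).1*(U (n:ℝ) 0 v).2 ≤ 0} with hA_def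
    have hAclosed : ∀ n, IsClosed (A n) := by
      intro n
      have : A n = {v : ℝ×ℝ | ‖v‖ = 1} ∩ {v : ℝ×ℝ | (U (n:ℝ) 0 v).1*(U (n:ℝ) 0 v).2 ≤ 0} := by
        rw [hA_def]; ext v; simp [Set.mem_inter_iff]
      rw [this]
      exact (isClosed_eq continuous_norm continuous_const).inter
        (isClosed_le (((continuous_fst.comp (U (n:ℝ) 0).continuous).mul
          (continuous_snd.comp (U (n:ℝ) 0).continuous))) continuous_const)
    have hAsub : ∀ n, A n ⊆ Metric.sphere (0:ℝ×ℝ) 1 := by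
      intro n v hv
      simpa [mem_sphere_zero_iff_norm] using hv.1
    have hAcpt : IsCompact (A 0) := (isCompact_sphere (0:ℝ×ℝ) 1).of_isClosed_subset
      (hAclosed 0) (hAsub 0)
    have hAnon : ∀ n, (A n).Nonempty := by
      intro n
      set w := U 0 (n:ℝ) ((1:ℝ), (-1:ℝ)) with hw_def
      have hUnw : U (n:ℝ) 0 w = ((1:ℝ), (-1:ℝ)) := by
        rw [hw_def, hcoc (n:ℝ) 0 (n:ℝ) ((1:ℝ),(-1:ℝ)), hU_id]; rfl
      have hwne : w ≠ 0 := by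
        intro h
        rw [h, map_zero] at hUnw
        simp [Prod.ext_iff] at hUnw
      have h0 : (0:ℝ) ≤ ‖w‖⁻¹ := inv_nonneg.mpr (norm_nonneg w)
      refine ⟨‖w‖⁻¹ • w, ?_, ?_⟩
      · rw [norm_smul, Real.norm_eq_abs, abs_of_nonneg h0]
        exact inv_mul_cancel₀ (norm_ne_zero_iff.mpr hwne)
      · show (U (n:ℝ) 0 (‖w‖⁻¹ • w)).1 * (U (n:ℝ) 0 (‖w‖⁻¹ • w)).2 ≤ 0
        rw [map_smul, hUnw]
        simp only [Prod.smul_fst, Prod.smul_snd, smul_eq_mul]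
        nlinarith [h0]
    have hAnest : ∀ n, A (n+1) ⊆ A n := by
      intro n v hv
      refine ⟨hv.1, ?_⟩
      by_contra hpos
      push_neg at hpos
      have h1 := hmonoP 0 v (show (n:ℝ) ≤ ((n+1:ℕ):ℝ) by push_cast; linarith)
      simp only at h1
      have he := exp_pos (-(4*bet)*(n:ℝ))
      have he' := exp_pos (-(4*bet)*((n+1:ℕ):ℝ))
      have hv2 := hv.2
      have hnp : (U ((n+1:ℕ):ℝ) 0 v).1*(U ((n+1:ℕ):ℝ) 0 v).2
          * exp (-(4*bet)*((n+1:ℕ):ℝ)) ≤ 0 :=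
        mul_nonpos_of_nonpos_of_nonneg hv2 he'.le
      nlinarith [mul_pos hpos he]
    obtain ⟨v, hv⟩ := IsCompact.nonempty_iInter_of_sequence_nonempty_isCompact_isClosed
      A hAnest hAnon hAcpt hAclosed
    rw [Set.mem_iInter] at hv
    refine ⟨v, (hv 0).1, ?_⟩
    intro t
    by_contra hpos
    push_neg at hpos
    have hn : t ≤ ((⌈t⌉₊ : ℕ):ℝ) := Nat.le_ceil t
    have h1 := hmonoP 0 v hn
    simp only at h1
    have he := exp_pos (-(4*bet)*t)
    have he' := exp_pos (-(4*bet)*((⌈t⌉₊:ℕ):ℝ))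
    have hv2 := (hv ⌈t⌉₊).2
    have hnp : (U ((⌈t⌉₊:ℕ):ℝ) 0 v).1*(U ((⌈t⌉₊:ℕ):ℝ) 0 v).2
        * exp (-(4*bet)*((⌈t⌉₊:ℕ):ℝ)) ≤ 0 :=
      mul_nonpos_of_nonpos_of_nonneg hv2 he'.le
    nlinarith [mul_pos hpos he]
  obtain ⟨q₀, hq₀n, hq₀⟩ : ∃ v : ℝ×ℝ, ‖v‖ = 1 ∧ ∀ t : ℝ, 0 ≤ (U t 0 v).1*(U t 0 v).2 := by
    set B : ℕ → Set (ℝ×ℝ) :=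
      fun n => {v : ℝ×ℝ | ‖v‖ = 1 ∧ 0 ≤ (U (-(n:ℝ)) 0 v).1*(U (-(n:ℝ)) 0 v).2} with hB_def
    have hBclosed : ∀ n, IsClosed (B n) := by
      intro n
      have : B n = {v : ℝ×ℝ | ‖v‖ = 1}
          ∩ {v : ℝ×ℝ | 0 ≤ (U (-(n:ℝ)) 0 v).1*(U (-(n:ℝ)) 0 v).2} := by
        rw [hB_def]; ext v; simp [Set.mem_inter_iff]
      rw [this]
      exact (isClosed_eq continuous_norm continuous_const).inter
        (isClosed_le continuous_const (((continuous_fst.comp (U (-(n:ℝ)) 0).continuous).mul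
          (continuous_snd.comp (U (-(n:ℝ)) 0).continuous))))
    have hBsub : ∀ n, B n ⊆ Metric.sphere (0:ℝ×ℝ) 1 := by
      intro n v hv
      simpa [mem_sphere_zero_iff_norm] using hv.1
    have hBcpt : IsCompact (B 0) := (isCompact_sphere (0:ℝ×ℝ) 1).of_isClosed_subset
      (hBclosed 0) (hBsub 0)
    have hBnon : ∀ n, (B n).Nonempty := by
      intro n
      set w := U 0 (-(n:ℝ)) ((1:ℝ), (1:ℝ)) with hw_def
      have hUnw : U (-(n:ℝ)) 0 w = ((1:ℝ), (1:ℝ)) := by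
        rw [hw_def, hcoc (-(n:ℝ)) 0 (-(n:ℝ)) ((1:ℝ),(1:ℝ)), hU_id]; rfl
      have hwne : w ≠ 0 := by
        intro h
        rw [h, map_zero] at hUnw
        simp [Prod.ext_iff] at hUnw
      have h0 : (0:ℝ) ≤ ‖w‖⁻¹ := inv_nonneg.mpr (norm_nonneg w)
      refine ⟨‖w‖⁻¹ • w, ?_, ?_⟩
      · rw [norm_smul, Real.norm_eq_abs, abs_of_nonneg h0]
        exact inv_mul_cancel₀ (norm_ne_zero_iff.mpr hwne)
      · show 0 ≤ (U (-(n:ℝ)) 0 (‖w‖⁻¹ • w)).1 * (U (-(n:ℝ)) 0 (‖w‖⁻¹ • w)).2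
        rw [map_smul, hUnw]
        simp only [Prod.smul_fst, Prod.smul_snd, smul_eq_mul]
        nlinarith [h0]
    have hBnest : ∀ n, B (n+1) ⊆ B n := by
      intro n v hv
      refine ⟨hv.1, ?_⟩
      have h1 := hmonoP 0 v (show (-(((n+1):ℕ):ℝ)) ≤ -(n:ℝ) by push_cast; linarith)
      simp only at h1
      have he := exp_pos (-(4*bet)*(-(((n+1):ℕ):ℝ)))
      have he' := exp_pos (-(4*bet)*(-(n:ℝ)))
      have hv2 := hv.2
      nlinarith [mul_nonneg hv2 he.le]
    obtain ⟨v, hv⟩ := IsCompact.nonempty_iInter_of_sequence_nonempty_isCompact_isClosed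
      B hBnest hBnon hBcpt hBclosed
    rw [Set.mem_iInter] at hv
    refine ⟨v, (hv 0).1, ?_⟩
    intro t
    have hn : (-((⌈-t⌉₊:ℕ):ℝ)) ≤ t := by
      have := Nat.le_ceil (-t)
      linarith
    have h1 := hmonoP 0 v hn
    simp only at h1
    have he := exp_pos (-(4*bet)*(-((⌈-t⌉₊:ℕ):ℝ)))
    have he' := exp_pos (-(4*bet)*t)
    have hv2 := (hv ⌈-t⌉₊).2
    nlinarith [mul_nonneg hv2 he.le]
  set p : ℝ → ℝ×ℝ := fun t => U t 0 p₀ with hp_def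
  set q : ℝ → ℝ×ℝ := fun t => U t 0 q₀ with hq_def
  have hUp : ∀ s t : ℝ, U t s (p s) = p t := fun s t => hcoc 0 s t p₀
  have hUq : ∀ s t : ℝ, U t s (q s) = q t := fun s t => hcoc 0 s t q₀
  have hpU : ∀ t : ℝ, p t = U t 0 p₀ := fun _ => rfl
  have hqU : ∀ t : ℝ, q t = U t 0 q₀ := fun _ => rfl
  have hpnorm : ∀ t, 0 < ‖p t‖ := by
    intro t
    refine norm_pos_iff.mpr ?_
    intro h
    have h1 : U 0 t (p t) = p 0 := hUp t 0
    rw [h, map_zero] at h1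
    have h2 : p 0 = p₀ := by rw [hpU, hU_id]; rfl
    rw [h2] at h1
    rw [← h1] at hp₀n
    simp at hp₀n
  have hqnorm : ∀ t, 0 < ‖q t‖ := by
    intro t
    refine norm_pos_iff.mpr ?_
    intro h
    have h1 : U 0 t (q t) = q 0 := hUq t 0
    rw [h, map_zero] at h1
    have h2 : q 0 = q₀ := by rw [hqU, hU_id]; rfl
    rw [h2] at h1
    rw [← h1] at hq₀n
    simp at hq₀n
  have hVpth : ∀ t, th*((p t).1^2+(p t).2^2) ≤ -((p t).1*(p t).2) := by
    intro t
    simp only [hpU]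
    have h1 := htheta 0 p₀ (t+1)
    rw [show t+(1:ℝ)-1 = t by ring] at h1
    have h2 := hp₀ (t+1)
    have h3 := hshrink 0 p₀ t (t+1) (by linarith)
    rw [show c*(t+1-t) = c by ring] at h3
    have h4 := hnormsq2 (U t 0 p₀)
    have h5 := hnormsq1 (U (t+1) 0 p₀)
    have h6 : ‖U t 0 p₀‖^2 ≤ ‖U (t+1) 0 p₀‖^2*(exp c*exp c) := by
      nlinarith [h3, norm_nonneg (U t 0 p₀), norm_nonneg (U (t+1) 0 p₀), exp_pos c]
    have h7 : (U t 0 p₀).1^2+(U t 0 p₀).2^2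
        ≤ 2*((U (t+1) 0 p₀).1^2+(U (t+1) 0 p₀).2^2)*(exp c*exp c) := by
      nlinarith [exp_pos c]
    have hE : exp (-(2*c)) * (exp c * exp c) = 1 := by
      rw [← Real.exp_add, ← Real.exp_add, show -(2*c) + (c + c) = 0 by ring, Real.exp_zero]
    calc th*((U t 0 p₀).1^2+(U t 0 p₀).2^2)
        ≤ th*(2*((U (t+1) 0 p₀).1^2+(U (t+1) 0 p₀).2^2)*(exp c*exp c)) :=
          mul_le_mul_of_nonneg_left h7 hth0.le
      _ = that*((U (t+1) 0 p₀).1^2+(U (t+1) 0 p₀).2^2)*(exp (-(2*c))*(exp c*exp c)) := by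
          rw [hth_def]; ring
      _ = that*((U (t+1) 0 p₀).1^2+(U (t+1) 0 p₀).2^2) := by rw [hE, mul_one]
      _ ≤ -((U t 0 p₀).1*(U t 0 p₀).2) := by linarith
  have hVqth : ∀ t, th*((q t).1^2+(q t).2^2) ≤ (q t).1*(q t).2 := by
    intro t
    simp only [hqU]
    have h1 := htheta 0 q₀ t
    have h2 := hq₀ (t-1)
    have h3 : that*((U t 0 q₀).1^2+(U t 0 q₀).2^2) ≤ (U t 0 q₀).1*(U t 0 q₀).2 := by linarith
    have h4 : th ≤ that := by
      rw [hth_def]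
      nlinarith [exp_le_one_iff.mpr (show -(2*c) ≤ 0 by linarith), hthat0,
        exp_pos (-(2*c))]
    nlinarith [sq_nonneg (U t 0 q₀).1, sq_nonneg (U t 0 q₀).2, hthat0]
  have hpdecay : ∀ s t : ℝ, s ≤ t → ‖p t‖ ≤ kap * exp (-(2*bet)*(t-s)) * ‖p s‖ := by
    intro s t hst
    have hm := hmonoM 0 p₀ hst
    simp only at hm
    have h3 := mul_le_mul_of_nonneg_right hm (exp_pos (-(4*bet)*t)).le
    have hE : exp ((4*bet)*s)*exp (-(4*bet)*t) = exp (-(4*bet)*(t-s)) := by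
      rw [← Real.exp_add, show (4*bet)*s + (-(4*bet)*t) = -(4*bet)*(t-s) by ring]
    have hE2 : exp ((4*bet)*t)*exp (-(4*bet)*t) = 1 := by
      rw [← Real.exp_add, show (4*bet)*t + (-(4*bet)*t) = 0 by ring, Real.exp_zero]
    have h4 : (U s 0 p₀).1*(U s 0 p₀).2 * exp (-(4*bet)*(t-s))
        ≤ (U t 0 p₀).1*(U t 0 p₀).2 := by
      calc (U s 0 p₀).1*(U s 0 p₀).2 * exp (-(4*bet)*(t-s))
          = (U s 0 p₀).1*(U s 0 p₀).2 * exp ((4*bet)*s) * exp (-(4*bet)*t) := by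
            rw [← hE]; ring
        _ ≤ (U t 0 p₀).1*(U t 0 p₀).2 * exp ((4*bet)*t) * exp (-(4*bet)*t) := h3
        _ = (U t 0 p₀).1*(U t 0 p₀).2 * (exp ((4*bet)*t) * exp (-(4*bet)*t)) := by ring
        _ = (U t 0 p₀).1*(U t 0 p₀).2 := by rw [hE2, mul_one]
    have hVt := hVpth t
    have hVs := hVpth s
    simp only [hpU] at hVt hVs ⊢
    have hnegVs : -((U s 0 p₀).1*(U s 0 p₀).2) ≤ ‖U s 0 p₀‖^2 := by
      have := hnormsq2 (U s 0 p₀)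
      nlinarith [sq_nonneg ((U s 0 p₀).1 + (U s 0 p₀).2)]
    have hE4 := exp_pos (-(4*bet)*(t-s))
    have hnt : th*((U t 0 p₀).1^2+(U t 0 p₀).2^2) ≤ ‖U s 0 p₀‖^2 * exp (-(4*bet)*(t-s)) := by
      calc th*((U t 0 p₀).1^2+(U t 0 p₀).2^2) ≤ -((U t 0 p₀).1*(U t 0 p₀).2) := hVt
        _ ≤ -((U s 0 p₀).1*(U s 0 p₀).2) * exp (-(4*bet)*(t-s)) := by nlinarith [h4]
        _ ≤ ‖U s 0 p₀‖^2 * exp (-(4*bet)*(t-s)) :=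
            mul_le_mul_of_nonneg_right hnegVs hE4.le
    have hnt2 : (U t 0 p₀).1^2+(U t 0 p₀).2^2
        ≤ kap * (‖U s 0 p₀‖^2 * exp (-(4*bet)*(t-s))) := by
      have := mul_le_mul_of_nonneg_left hnt hkap0.le
      calc (U t 0 p₀).1^2+(U t 0 p₀).2^2
          = kap*th*((U t 0 p₀).1^2+(U t 0 p₀).2^2) := by
            rw [mul_comm kap th, hthkap, one_mul]
        _ = kap*(th*((U t 0 p₀).1^2+(U t 0 p₀).2^2)) := by ring
        _ ≤ kap * (‖U s 0 p₀‖^2 * exp (-(4*bet)*(t-s))) := this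
    have hE22 : exp (-(2*bet)*(t-s))*exp (-(2*bet)*(t-s)) = exp (-(4*bet)*(t-s)) := by
      rw [← Real.exp_add, show -(2*bet)*(t-s) + -(2*bet)*(t-s) = -(4*bet)*(t-s) by ring]
    refine le_of_pow_le_pow_left₀ two_ne_zero (by positivity) ?_
    have hns1 := hnormsq1 (U t 0 p₀)
    calc ‖U t 0 p₀‖^2 ≤ (U t 0 p₀).1^2+(U t 0 p₀).2^2 := hns1
      _ ≤ kap * (‖U s 0 p₀‖^2 * exp (-(4*bet)*(t-s))) := hnt2
      _ ≤ kap^2 * (‖U s 0 p₀‖^2 * exp (-(4*bet)*(t-s))) := by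
          nlinarith [hkap1, hkap0, mul_nonneg (sq_nonneg ‖U s 0 p₀‖) hE4.le]
      _ = (kap * exp (-(2*bet)*(t-s)) * ‖U s 0 p₀‖)^2 := by
          rw [← hE22]; ring
    
  have hqdecay : ∀ s t : ℝ, s ≤ t → ‖q s‖ ≤ kap * exp (-(2*bet)*(t-s)) * ‖q t‖ := by
    intro s t hst
    have hm := hmonoP 0 q₀ hst
    simp only at hm
    have h3 := mul_le_mul_of_nonneg_right hm (exp_pos ((4*bet)*s)).le
    have hE : exp (-(4*bet)*t)*exp ((4*bet)*s) = exp (-(4*bet)*(t-s)) := by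
      rw [← Real.exp_add, show -(4*bet)*t + (4*bet)*s = -(4*bet)*(t-s) by ring]
    have hE2 : exp (-(4*bet)*s)*exp ((4*bet)*s) = 1 := by
      rw [← Real.exp_add, show -(4*bet)*s + (4*bet)*s = 0 by ring, Real.exp_zero]
    have h4 : (U s 0 q₀).1*(U s 0 q₀).2
        ≤ (U t 0 q₀).1*(U t 0 q₀).2 * exp (-(4*bet)*(t-s)) := by
      calc (U s 0 q₀).1*(U s 0 q₀).2
          = (U s 0 q₀).1*(U s 0 q₀).2 * (exp (-(4*bet)*s)*exp ((4*bet)*s)) := by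
            rw [hE2, mul_one]
        _ = (U s 0 q₀).1*(U s 0 q₀).2 * exp (-(4*bet)*s) * exp ((4*bet)*s) := by ring
        _ ≤ (U t 0 q₀).1*(U t 0 q₀).2 * exp (-(4*bet)*t) * exp ((4*bet)*s) := h3
        _ = (U t 0 q₀).1*(U t 0 q₀).2 * (exp (-(4*bet)*t) * exp ((4*bet)*s)) := by ring
        _ = (U t 0 q₀).1*(U t 0 q₀).2 * exp (-(4*bet)*(t-s)) := by rw [hE]
    have hVt := hVqth t
    have hVs := hVqth s
    simp only [hqU] at hVt hVs ⊢
    have hposVt : (U t 0 q₀).1*(U t 0 q₀).2 ≤ ‖U t 0 q₀‖^2 := by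
      have := hnormsq2 (U t 0 q₀)
      nlinarith [sq_nonneg ((U t 0 q₀).1 - (U t 0 q₀).2)]
    have hE4 := exp_pos (-(4*bet)*(t-s))
    have hnt : th*((U s 0 q₀).1^2+(U s 0 q₀).2^2) ≤ ‖U t 0 q₀‖^2 * exp (-(4*bet)*(t-s)) := by
      calc th*((U s 0 q₀).1^2+(U s 0 q₀).2^2) ≤ (U s 0 q₀).1*(U s 0 q₀).2 := hVs
        _ ≤ (U t 0 q₀).1*(U t 0 q₀).2 * exp (-(4*bet)*(t-s)) := h4
        _ ≤ ‖U t 0 q₀‖^2 * exp (-(4*bet)*(t-s)) :=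
            mul_le_mul_of_nonneg_right hposVt hE4.le
    have hnt2 : (U s 0 q₀).1^2+(U s 0 q₀).2^2
        ≤ kap * (‖U t 0 q₀‖^2 * exp (-(4*bet)*(t-s))) := by
      have := mul_le_mul_of_nonneg_left hnt hkap0.le
      calc (U s 0 q₀).1^2+(U s 0 q₀).2^2
          = kap*th*((U s 0 q₀).1^2+(U s 0 q₀).2^2) := by
            rw [mul_comm kap th, hthkap, one_mul]
        _ = kap*(th*((U s 0 q₀).1^2+(U s 0 q₀).2^2)) := by ring
        _ ≤ kap * (‖U t 0 q₀‖^2 * exp (-(4*bet)*(t-s))) := this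
    have hE22 : exp (-(2*bet)*(t-s))*exp (-(2*bet)*(t-s)) = exp (-(4*bet)*(t-s)) := by
      rw [← Real.exp_add, show -(2*bet)*(t-s) + -(2*bet)*(t-s) = -(4*bet)*(t-s) by ring]
    refine le_of_pow_le_pow_left₀ two_ne_zero (by positivity) ?_
    calc ‖U s 0 q₀‖^2 ≤ (U s 0 q₀).1^2+(U s 0 q₀).2^2 := hnormsq1 _
      _ ≤ kap * (‖U t 0 q₀‖^2 * exp (-(4*bet)*(t-s))) := hnt2
      _ ≤ kap^2 * (‖U t 0 q₀‖^2 * exp (-(4*bet)*(t-s))) := by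
          nlinarith [hkap1, hkap0, mul_nonneg (sq_nonneg ‖U t 0 q₀‖) hE4.le]
      _ = (kap * exp (-(2*bet)*(t-s)) * ‖U t 0 q₀‖)^2 := by
          rw [← hE22]; ring
    
  set Dd : ℝ → ℝ := fun t => (p t).1*(q t).2 - (p t).2*(q t).1 with hDd_def
  have hDdU : ∀ t, Dd t = (p t).1*(q t).2 - (p t).2*(q t).1 := fun _ => rfl
  have hDlow : ∀ t, th * (‖p t‖*‖q t‖) ≤ |Dd t| := by
    intro t
    have h1 := hVpth t
    have h2 := hVqth t
    have e1 : th*‖p t‖^2 ≤ -((p t).1*(p t).2) :=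
      le_trans (mul_le_mul_of_nonneg_left (hnormsq1 (p t)) hth0.le) h1
    have e2 : th*‖q t‖^2 ≤ (q t).1*(q t).2 :=
      le_trans (mul_le_mul_of_nonneg_left (hnormsq1 (q t)) hth0.le) h2
    have e1' : 0 ≤ -((p t).1*(p t).2) := le_trans (by positivity) e1
    have e3 : (th*‖p t‖^2)*(th*‖q t‖^2) ≤ (-((p t).1*(p t).2))*((q t).1*(q t).2) :=
      mul_le_mul e1 e2 (by positivity) e1'
    have h4 : (th*(‖p t‖*‖q t‖))^2 ≤ |Dd t|^2 := by
      rw [sq_abs, hDdU t]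
      nlinarith [e3, sq_nonneg ((p t).1*(q t).2), sq_nonneg ((p t).2*(q t).1),
        sq_nonneg (th*(‖p t‖*‖q t‖))]
    exact le_of_pow_le_pow_left₀ two_ne_zero (abs_nonneg _) h4
  have hDne : ∀ t, Dd t ≠ 0 := by
    intro t
    have h1 := hDlow t
    have hpos : 0 < th*(‖p t‖*‖q t‖) := mul_pos hth0 (mul_pos (hpnorm t) (hqnorm t))
    exact abs_pos.mp (lt_of_lt_of_le hpos h1)
  have hdet_le : ∀ v w : ℝ×ℝ, |v.1*w.2 - v.2*w.1| ≤ 2*‖v‖*‖w‖ := by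
    intro v w
    have h1 : |v.1| ≤ ‖v‖ := by simpa [Real.norm_eq_abs] using norm_fst_le v
    have h2 : |v.2| ≤ ‖v‖ := by simpa [Real.norm_eq_abs] using norm_snd_le v
    have h3 : |w.1| ≤ ‖w‖ := by simpa [Real.norm_eq_abs] using norm_fst_le w
    have h4 : |w.2| ≤ ‖w‖ := by simpa [Real.norm_eq_abs] using norm_snd_le w
    calc |v.1*w.2 - v.2*w.1| = |v.1*w.2 + -(v.2*w.1)| := by rw [sub_eq_add_neg]
      _ ≤ |v.1*w.2| + |-(v.2*w.1)| := abs_add_le _ _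
      _ = |v.1| * |w.2| + |v.2| * |w.1| := by rw [abs_neg, abs_mul, abs_mul]
      _ ≤ ‖v‖*‖w‖ + ‖v‖*‖w‖ :=
          add_le_add (mul_le_mul h1 h4 (abs_nonneg _) (norm_nonneg _))
            (mul_le_mul h2 h3 (abs_nonneg _) (norm_nonneg _))
      _ = 2*‖v‖*‖w‖ := by ring
  set P : ℝ → (ℝ × ℝ) →L[ℝ] (ℝ × ℝ) := fun t =>
    (((q t).2/Dd t) • (ContinuousLinearMap.fst ℝ ℝ ℝ)
      - ((q t).1/Dd t) • (ContinuousLinearMap.snd ℝ ℝ ℝ)).smulRight (p t) with hP_def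
  have hPapp : ∀ (t : ℝ) (v : ℝ×ℝ), P t v = ((v.1*(q t).2 - v.2*(q t).1)/Dd t) • p t := by
    intro t v
    rw [hP_def]
    simp only [ContinuousLinearMap.smulRight_apply, ContinuousLinearMap.sub_apply,
      ContinuousLinearMap.smul_apply, ContinuousLinearMap.coe_fst',
      ContinuousLinearMap.coe_snd', smul_eq_mul]
    congr 1
    ring
  have hwron : ∀ (s t : ℝ) (v w v' w' : ℝ×ℝ),
      ((U t s v).1*(U t s w).2 - (U t s v).2*(U t s w).1) * (v'.1*w'.2 - v'.2*w'.1)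
      = (v.1*w.2 - v.2*w.1) * ((U t s v').1*(U t s w').2 - (U t s v').2*(U t s w').1) := by
    intro s t₁ v w v' w'
    have hd1 : ∀ (v w : ℝ×ℝ) (τ : ℝ), HasDerivAt
        (fun τ => (U τ s v).1*(U τ s w).2 - (U τ s v).2*(U τ s w).1)
        (-(a τ)*((U τ s v).1*(U τ s w).2 - (U τ s v).2*(U τ s w).1)) τ := by
      intro v w τ
      have h1 := ((hx s v τ).mul (hy s w τ)).sub ((hy s v τ).mul (hx s w τ))
      refine h1.congr_deriv ?_
      ring
    set g : ℝ → ℝ := fun τ =>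
      ((U τ s v).1*(U τ s w).2 - (U τ s v).2*(U τ s w).1) * (v'.1*w'.2 - v'.2*w'.1)
      - (v.1*w.2 - v.2*w.1) * ((U τ s v').1*(U τ s w').2 - (U τ s v').2*(U τ s w').1)
      with hg_def
    have hgd : ∀ τ, HasDerivAt g (-(a τ)*g τ) τ := by
      intro τ
      have h1 := ((hd1 v w τ).mul_const (v'.1*w'.2 - v'.2*w'.1)).sub
        ((hd1 v' w' τ).const_mul (v.1*w.2 - v.2*w.1))
      refine h1.congr_deriv ?_
      rw [hg_def]
      ring
    have hgb : ∀ τ, ‖-(a τ)*g τ‖ ≤ M*‖g τ‖ := by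
      intro τ
      rw [Real.norm_eq_abs, Real.norm_eq_abs, abs_mul, abs_neg]
      exact mul_le_mul_of_nonneg_right (haM τ) (abs_nonneg _)
    have hgs : g s = 0 := by
      rw [hg_def]
      simp only [hU_id, ContinuousLinearMap.id_apply]
      ring
    have hz : g t₁ = 0 := by
      rcases le_total s t₁ with h | h
      · have := gron_fwd hgd hgb h
        rw [hgs] at this
        simpa using norm_le_zero_iff.mp (by simpa using this)
      · have := gron_bwd hgd hgb h
        rw [hgs] at this
        simpa using norm_le_zero_iff.mp (by simpa using this)
    have := sub_eq_zero.mp hz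
    exact this
  have hDrel : ∀ (s t : ℝ) (v : ℝ×ℝ),
      ((U t s v).1*(q t).2 - (U t s v).2*(q t).1) * Dd s
        = (v.1*(q s).2 - v.2*(q s).1) * Dd t := by
    intro s t v
    have h1 := hwron s t v (q s) (p s) (q s)
    rw [hUq s t, hUp s t] at h1
    rw [hDdU s, hDdU t]
    calc ((U t s v).1*(q t).2 - (U t s v).2*(q t).1) * ((p s).1*(q s).2 - (p s).2*(q s).1)
        = (v.1*(q s).2 - v.2*(q s).1) * ((p t).1*(q t).2 - (p t).2*(q t).1) := h1
      _ = (v.1*(q s).2 - v.2*(q s).1) * ((p t).1*(q t).2 - (p t).2*(q t).1) := rfl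
  have hcomm : ∀ (s t : ℝ) (v : ℝ×ℝ), P t (U t s v) = U t s (P s v) := by
    intro s t v
    rw [hPapp t (U t s v), hPapp s v, map_smul, hUp s t]
    congr 1
    rw [div_eq_div_iff (hDne t) (hDne s)]
    exact hDrel s t v
  have hPnorm : ∀ (t:ℝ) (v : ℝ×ℝ), ‖P t v‖ ≤ 2*kap*‖v‖ := by
    intro t v
    rw [hPapp, norm_smul, Real.norm_eq_abs, abs_div]
    have hDpos : 0 < |Dd t| := lt_of_lt_of_le
      (mul_pos hth0 (mul_pos (hpnorm t) (hqnorm t))) (hDlow t)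
    rw [div_mul_eq_mul_div, div_le_iff₀ hDpos]
    have h1 := hdet_le v (q t)
    have h2 := hDlow t
    calc |v.1*(q t).2 - v.2*(q t).1| * ‖p t‖
        ≤ (2*‖v‖*‖q t‖) * ‖p t‖ :=
          mul_le_mul_of_nonneg_right h1 (norm_nonneg _)
      _ = (2*‖v‖*(‖p t‖*‖q t‖))*(th*kap) := by rw [hthkap]; ring
      _ = (2*kap*‖v‖)*(th*(‖p t‖*‖q t‖)) := by ring
      _ ≤ (2*kap*‖v‖)*|Dd t| :=
          mul_le_mul_of_nonneg_left h2 (by positivity)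
  have hsub : ∀ (t:ℝ) (v:ℝ×ℝ), v - P t v = (((p t).1*v.2 - (p t).2*v.1)/Dd t) • q t := by
    intro t v
    have hD := hDne t
    rw [hDdU t] at hD
    rw [hPapp t v, hDdU t]
    refine Prod.ext ?_ ?_ <;>
      simp only [Prod.fst_sub, Prod.snd_sub, Prod.smul_fst, Prod.smul_snd, smul_eq_mul] <;>
      rw [div_mul_eq_mul_div, div_mul_eq_mul_div, sub_eq_iff_eq_add, ← add_div,
        eq_div_iff hD] <;> ring
  set Vf : ℝ → ℝ → (ℝ×ℝ) → (ℝ×ℝ) :=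
    fun s t w => (((p t).1*w.2 - (p t).2*w.1)/Dd t) • q s with hVf_def
  have hVfq : ∀ (s t : ℝ) (γ : ℝ), Vf s t (γ • q t) = γ • q s := by
    intro s t γ
    rw [hVf_def]
    simp only [Prod.smul_fst, Prod.smul_snd, smul_eq_mul]
    congr 1
    have hD := hDne t
    rw [hDdU t] at hD
    rw [hDdU t]
    field_simp
  have hker : ∀ (t:ℝ) (v:ℝ×ℝ), (P t v = 0) ↔ (v.1*(q t).2 - v.2*(q t).1 = 0) := by
    intro t v
    rw [hPapp]
    constructor
    · intro h
      rcases smul_eq_zero.mp h with h | h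
      · exact (div_eq_zero_iff.mp h).resolve_right (hDne t)
      · exact absurd h (norm_pos_iff.mp (hpnorm t))
    · intro h
      rw [h, zero_div, zero_smul]
  have hmem : ∀ (t:ℝ) (v:ℝ×ℝ), v ∈ (LinearMap.ker (P t : (ℝ × ℝ) →ₗ[ℝ] (ℝ × ℝ)) : Set (ℝ×ℝ)) ↔ P t v = 0 := by
    intro t v
    simp [LinearMap.mem_ker]
  refine ⟨⟨1, c, ?_⟩, 2*kap^2+kap, 2*bet, ?_, by linarith [hbet0], P, ?_, ?_, ?_, ?_, ?_, ?_,
    Vf, ?_, ?_, ?_⟩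
  · -- exponential boundedness
    intro s t hst
    rw [one_mul]
    refine ContinuousLinearMap.opNorm_le_bound _ (exp_pos _).le ?_
    intro v
    have h1 := hgrow s v s t hst
    have h2 : U s s v = v := by rw [hU_id]; rfl
    rw [h2] at h1
    calc ‖U t s v‖ ≤ ‖v‖*exp (c*(t-s)) := h1
      _ = exp (c*(t-s))*‖v‖ := by ring
  · -- N positive
    nlinarith [hkap0, mul_pos hkap0 hkap0]
  · -- idempotent
    intro t v
    rw [hPapp t v, map_smul]
    congr 1
    rw [hPapp t (p t), ← hDdU t, div_self (hDne t), one_smul]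
  · -- continuity
    intro v
    have hcp : Continuous p := by
      refine continuous_iff_continuousAt.mpr fun t => ?_
      exact (hU_ode 0 p₀ t).continuousAt
    have hcq : Continuous q := by
      refine continuous_iff_continuousAt.mpr fun t => ?_
      exact (hU_ode 0 q₀ t).continuousAt
    have heq : (fun t => P t v) = fun t => ((v.1*(q t).2 - v.2*(q t).1)/Dd t) • p t :=
      funext fun t => hPapp t v
    rw [heq]
    refine Continuous.smul (f := fun t => (v.1*(q t).2 - v.2*(q t).1)/Dd t) ?_ hcp
    refine Continuous.div ?_ ?_ hDne
    · exact (continuous_const.mul (continuous_snd.comp hcq)).sub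
        (continuous_const.mul (continuous_fst.comp hcq))
    · show Continuous fun t => (p t).1*(q t).2 - (p t).2*(q t).1
      exact ((continuous_fst.comp hcp).mul (continuous_snd.comp hcq)).sub
        ((continuous_snd.comp hcp).mul (continuous_fst.comp hcq))
  · -- bounded
    intro v
    exact ⟨2*kap*‖v‖, fun t => hPnorm t v⟩
  · -- commutation
    intro s t _ v
    exact hcomm s t v
  · -- BijOn
    intro s t hst
    refine ⟨?_, ?_, ?_⟩
    · intro v hv
      rw [hmem] at hv ⊢
      show P t (U t s v) = 0
      rw [hcomm s t v, hv, map_zero]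
    · intro v _ w _ h
      exact hUinj s t v w h
    · intro w hw
      rw [hmem] at hw
      have h1 : U t s (U s t w) = w := by rw [hcoc t s t w, hU_id]; rfl
      refine ⟨U s t w, ?_, ?_⟩
      · rw [hmem]
        have h2 := hcomm s t (U s t w)
        rw [h1, hw] at h2
        exact hUinj s t (P s (U s t w)) 0 (by rw [map_zero]; exact h2.symm)
      · exact h1
  · -- stable decay
    intro s t hst v
    have h1 : U t s (P s v) = ((v.1*(q s).2 - v.2*(q s).1)/Dd s) • p t := by
      rw [hPapp s v, map_smul, hUp s t]
    rw [h1, norm_smul, Real.norm_eq_abs]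
    have h2 := hpdecay s t hst
    have h3 : |(v.1*(q s).2 - v.2*(q s).1)/Dd s| * ‖p s‖ ≤ 2*kap*‖v‖ := by
      have h4 := hPnorm s v
      rw [hPapp s v, norm_smul, Real.norm_eq_abs] at h4
      exact h4
    calc |(v.1*(q s).2 - v.2*(q s).1)/Dd s| * ‖p t‖
        ≤ |(v.1*(q s).2 - v.2*(q s).1)/Dd s| * (kap*exp (-(2*bet)*(t-s))*‖p s‖) :=
          mul_le_mul_of_nonneg_left h2 (abs_nonneg _)
      _ = (kap*exp (-(2*bet)*(t-s))) * (|(v.1*(q s).2 - v.2*(q s).1)/Dd s| * ‖p s‖) := by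
          ring
      _ ≤ (kap*exp (-(2*bet)*(t-s))) * (2*kap*‖v‖) := by
          refine mul_le_mul_of_nonneg_left h3 ?_
          positivity
      _ = (2*kap^2) * exp (-(2*bet)*(t-s)) * ‖v‖ := by ring
      _ ≤ (2*kap^2+kap) * exp (-(2*bet)*(t-s)) * ‖v‖ := by
          nlinarith [exp_pos (-(2*bet)*(t-s)), norm_nonneg v, hkap0,
            mul_nonneg (exp_pos (-(2*bet)*(t-s))).le (norm_nonneg v)]
  · -- V left inverse
    intro s t hst v
    rw [hsub s v, map_smul, hUq s t, hVfq]
  · -- V right inverse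
    intro s t hst v
    rw [hsub t v, hVfq, map_smul, hUq s t]
  · -- V decay
    intro s t hst v
    rw [hsub t v, hVfq, norm_smul, Real.norm_eq_abs]
    have h2 := hqdecay s t hst
    have h3 : |((p t).1*v.2 - (p t).2*v.1)/Dd t| * ‖q t‖ ≤ (1 + 2*kap)*‖v‖ := by
      have h4 : ‖v - P t v‖ ≤ ‖v‖ + 2*kap*‖v‖ :=
        le_trans (norm_sub_le _ _) (by linarith [hPnorm t v])
      rw [hsub t v, norm_smul, Real.norm_eq_abs] at h4
      linarith
    calc |((p t).1*v.2 - (p t).2*v.1)/Dd t| * ‖q s‖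
        ≤ |((p t).1*v.2 - (p t).2*v.1)/Dd t| * (kap*exp (-(2*bet)*(t-s))*‖q t‖) :=
          mul_le_mul_of_nonneg_left h2 (abs_nonneg _)
      _ = (kap*exp (-(2*bet)*(t-s))) * (|((p t).1*v.2 - (p t).2*v.1)/Dd t| * ‖q t‖) := by
          ring
      _ ≤ (kap*exp (-(2*bet)*(t-s))) * ((1+2*kap)*‖v‖) := by
          refine mul_le_mul_of_nonneg_left h3 ?_
          positivity
      _ = (2*kap^2+kap) * exp (-(2*bet)*(t-s)) * ‖v‖ := by ring
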